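/- Let G be an abelian group, A ⊆ G a finite nonempty set, and K ≥ 1 a real number. If E(A) ≥ |A|³/K, then the set of popular sums C = {x ∈ G : r_{A,A}(x) ≥ |A|/(2K)} satisfies |C| ≥ |A|/(2K). -/

import Mathlib

open scoped Pointwise

/-- The representation function `r_{A,B}(x)`: the number of pairs
`(a, b) ∈ A × B` with `a + b = x`. -/
def repFn {G : Type*} [AddCommGroup G] [DecidableEq G] (A B : Finset G) (x : G) : ℕ :=
  ((A ×ˢ B).filter fun ab => ab.1 + ab.2 = x).card

/-- The additive energy `E(A,B)`: the number of quadruples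
`(a₁, a₂, b₁, b₂) ∈ A × A × B × B` with `a₁ + b₁ = a₂ + b₂`. -/
def addEnergy {G : Type*} [AddCommGroup G] [DecidableEq G] (A B : Finset G) : ℕ :=
  (((A ×ˢ A) ×ˢ B ×ˢ B).filter fun x => x.1.1 + x.2.1 = x.1.2 + x.2.2).card

section Aux
open Finset
variable {G : Type*} [AddCommGroup G] [DecidableEq G] (A : Finset G)

lemma repFn_le_card (x : G) : repFn A A x ≤ A.card := by
  apply Finset.card_le_card_of_injOn (fun p => p.1)
  · intro p hp; simp only [mem_coe, mem_filter, mem_product] at hp; exact hp.1.1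
  · rintro ⟨p1, p2⟩ hp ⟨q1, q2⟩ hq h
    simp only [coe_filter, Set.mem_setOf_eq, mem_product] at hp hq
    simp only at h
    subst h
    exact Prod.ext rfl (add_left_cancel (hp.2.trans hq.2.symm))

lemma sum_repFn : ∑ x ∈ A + A, repFn A A x = A.card * A.card := by
  rw [← Finset.card_product]
  rw [Finset.card_eq_sum_card_fiberwise (f := fun p : G × G => p.1 + p.2) (t := A + A) (by
    intro p hp
    simp only [mem_coe, mem_product] at hp
    exact add_mem_add hp.1 hp.2)]
  rfl

lemma energy_eq : _root_.addEnergy A A = ∑ x ∈ A + A, (repFn A A x)^2 := by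
  rw [_root_.addEnergy]
  rw [Finset.card_eq_sum_card_fiberwise (f := fun q : (G × G) × G × G => q.1.1 + q.2.1) (t := A + A) (by
    intro q hq
    simp only [mem_coe, mem_filter, mem_product] at hq
    exact add_mem_add hq.1.1.1 hq.1.2.1)]
  refine Finset.sum_congr rfl fun x _ => ?_
  rw [sq, repFn, ← Finset.card_product]
  apply Finset.card_bij (fun q _ => ((q.1.1, q.2.1), (q.1.2, q.2.2)))
  · intro q hq
    simp only [mem_filter, mem_product] at hq ⊢
    obtain ⟨⟨hmem, h5⟩, h6⟩ := hq
    exact ⟨⟨⟨hmem.1.1, hmem.2.1⟩, h6⟩, ⟨hmem.1.2, hmem.2.2⟩, h5.symm.trans h6⟩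
  · rintro ⟨⟨a1, a2⟩, b1, b2⟩ _ ⟨⟨c1, c2⟩, d1, d2⟩ _ h
    simp only [Prod.mk.injEq] at h
    obtain ⟨⟨h1, h2⟩, h3, h4⟩ := h
    simp_all
  · rintro ⟨⟨a1, b1⟩, a2, b2⟩ hq
    refine ⟨((a1, a2), (b1, b2)), ?_, rfl⟩
    simp only [mem_filter, mem_product] at hq ⊢
    obtain ⟨⟨⟨h1, h2⟩, h3⟩, ⟨h4, h5⟩, h6⟩ := hq
    exact ⟨⟨⟨⟨h1, h4⟩, h2, h5⟩, h3.trans h6.symm⟩, h3⟩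

end Aux

/-- If `E(A) ≥ |A|³/K` for a nonempty finite `A ⊆ G` and real `K ≥ 1`, then the
set of popular sums `C = {x : r_{A,A}(x) ≥ |A|/(2K)}` has size `|C| ≥ |A|/(2K)`.
(Since `|A|/(2K) > 0`, every popular sum lies in `A + A`, so `C` is the
corresponding subset of the sumset.) -/


theorem popular_sums_card {G : Type*} [AddCommGroup G] [DecidableEq G]
    (A : Finset G) (hA : A.Nonempty) (K : ℝ) (hK : 1 ≤ K)
    (hE : (A.card : ℝ) ^ 3 / K ≤ (addEnergy A A : ℝ)) :
    (A.card : ℝ) / (2 * K) ≤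
      (((A + A).filter fun x => (A.card : ℝ) / (2 * K) ≤ (repFn A A x : ℝ)).card : ℝ) := by
  classical
  set n : ℝ := (A.card : ℝ) with hn
  have hn0 : 0 < n := by
    rw [hn]; exact_mod_cast Finset.card_pos.2 hA
  have hK0 : (0:ℝ) < K := lt_of_lt_of_le one_pos hK
  set P := (A + A).filter fun x => n / (2 * K) ≤ (repFn A A x : ℝ) with hP
  have hsum : ∑ x ∈ A + A, (repFn A A x : ℝ) = n ^ 2 := by
    rw [hn, sq]
    exact_mod_cast congrArg (Nat.cast : ℕ → ℝ) (sum_repFn A)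
  have hEeq : (addEnergy A A : ℝ) = ∑ x ∈ A + A, (repFn A A x : ℝ) ^ 2 := by
    rw [energy_eq A]
    push_cast
    rfl
  have hsplit :
      ∑ x ∈ P, (repFn A A x : ℝ) ^ 2
        + ∑ x ∈ (A + A).filter (fun x => ¬ (n / (2 * K) ≤ (repFn A A x : ℝ))),
            (repFn A A x : ℝ) ^ 2
        = ∑ x ∈ A + A, (repFn A A x : ℝ) ^ 2 :=
    Finset.sum_filter_add_sum_filter_not _ _ _
  have hb1 : ∑ x ∈ P, (repFn A A x : ℝ) ^ 2 ≤ (P.card : ℝ) * n ^ 2 := by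
    have := Finset.sum_le_card_nsmul P (fun x => (repFn A A x : ℝ) ^ 2) (n ^ 2)
      (fun x _ => by
        show ((repFn A A x : ℝ)) ^ 2 ≤ n ^ 2
        have h1 : (repFn A A x : ℝ) ≤ n := by
          rw [hn]; exact_mod_cast repFn_le_card A x
        have h2 : (0:ℝ) ≤ (repFn A A x : ℝ) := by positivity
        nlinarith [mul_le_mul h1 h1 h2 (le_trans h2 h1)])
    simpa [nsmul_eq_mul] using this
  have hb2 : ∑ x ∈ (A + A).filter (fun x => ¬ (n / (2 * K) ≤ (repFn A A x : ℝ))),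
      (repFn A A x : ℝ) ^ 2 ≤ n / (2 * K) * n ^ 2 := by
    calc ∑ x ∈ (A + A).filter (fun x => ¬ (n / (2 * K) ≤ (repFn A A x : ℝ))),
        (repFn A A x : ℝ) ^ 2
        ≤ ∑ x ∈ (A + A).filter (fun x => ¬ (n / (2 * K) ≤ (repFn A A x : ℝ))),
            n / (2 * K) * (repFn A A x : ℝ) := by
          apply Finset.sum_le_sum
          intro x hx
          have hx' := (Finset.mem_filter.1 hx).2
          have hlt : (repFn A A x : ℝ) ≤ n / (2 * K) := le_of_lt (not_le.mp hx')
          have h2 : (0:ℝ) ≤ (repFn A A x : ℝ) := by positivity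
          nlinarith
      _ = n / (2 * K) * ∑ x ∈ (A + A).filter (fun x => ¬ (n / (2 * K) ≤ (repFn A A x : ℝ))),
            (repFn A A x : ℝ) := by rw [Finset.mul_sum]
      _ ≤ n / (2 * K) * n ^ 2 := by
          apply mul_le_mul_of_nonneg_left _ (by positivity)
          rw [← hsum]
          exact Finset.sum_le_sum_of_subset_of_nonneg (Finset.filter_subset _ _)
            (fun x _ _ => by positivity)
  have key : n ^ 3 / K ≤ (P.card : ℝ) * n ^ 2 + n / (2 * K) * n ^ 2 := by
    calc n ^ 3 / K ≤ (addEnergy A A : ℝ) := hE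
      _ = _ := hEeq
      _ = _ := hsplit.symm
      _ ≤ _ := add_le_add hb1 hb2
  have h2 : n ^ 3 / (2 * K) ≤ (P.card : ℝ) * n ^ 2 := by
    have : n ^ 3 / K - n / (2 * K) * n ^ 2 = n ^ 3 / (2 * K) := by
      field_simp; ring
    linarith
  have hn2 : (0:ℝ) < n ^ 2 := by positivity
  have h2K : (0:ℝ) < 2 * K := by positivity
  rw [div_le_iff₀ h2K] at h2 ⊢
  nlinarith [h2, hn2, hn0]
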